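/- arXiv:1512.04668 — 6 statements merged into one kernel-verified Lean document; each statement's English description precedes it below -/
import Mathlib

section
/- Let n ≥ 2, let κ = (κ₁,…,κₙ) be a circulation with all κⱼ ∈ ℝ nonzero, and let Z ∈ DV, ω ∈ ℂ with Re(ω) ≠ 0 and z₀ ∈ ℂ satisfy V_j(Z) = ω(Z_j − z₀) for all j. Then the curve z(t) = z₀ + √(2·Re(ω)·t + 1) · exp(i·(Im(ω)/(2·Re(ω)))·ln(2·Re(ω)·t + 1)) · (Z − z₀) (acting componentwise on Z − z₀) satisfies z(0) = Z, takes values in DV, and solves z′(t) = V(z(t)) for all real t with 2·Re(ω)·t + 1 > 0. -/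
/-- The point-vortex vector field `V` for circulation `κ`:
`V_j(z) = i · Σ_{k ≠ j} κ_k · (z_j − z_k) / |z_j − z_k|²`. -/
noncomputable def vortexField {n : ℕ} (κ : Fin n → ℝ) (z : Fin n → ℂ) (j : Fin n) : ℂ :=
  Complex.I * ∑ k ∈ Finset.univ.erase j,
    (κ k : ℂ) * (z j - z k) / ((‖z j - z k‖ : ℝ) : ℂ) ^ 2

/-- Membership in the phase space `DV`: all vortex positions are pairwise distinct. -/
def memDV {n : ℕ} (z : Fin n → ℂ) : Prop := ∀ j k : Fin n, j ≠ k → z j ≠ z k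

private lemma sqrt_eq_cexp {u : ℝ} (hu : 0 < u) :
    ((Real.sqrt u : ℝ) : ℂ) = Complex.exp ((1/2 : ℂ) * (Real.log u : ℂ)) := by
  have h1 : Real.sqrt u = Real.exp (Real.log u * (1/2)) := by
    rw [← Real.rpow_def_of_pos hu, ← Real.sqrt_eq_rpow]
  rw [h1, Complex.ofReal_exp]
  congr 1
  push_cast
  ring

/-- if `V_j(Z) = ω (Z_j − z₀)` with `Re ω ≠ 0`, then the curve
`z(t) = z₀ + √(2·Re ω·t + 1) · exp(i·(Im ω/(2 Re ω))·ln(2·Re ω·t + 1)) · (Z − z₀)`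
satisfies `z(0) = Z`, stays in `DV`, and solves `z′ = V(z)` wherever `2·Re ω·t + 1 > 0`. -/
theorem collapsing_evolution {n : ℕ} (hn : 2 ≤ n) (κ : Fin n → ℝ) (hκ : ∀ j, κ j ≠ 0)
    (Z : Fin n → ℂ) (hZ : memDV Z) (ω z₀ : ℂ) (hω : ω.re ≠ 0)
    (hV : ∀ j, vortexField κ Z j = ω * (Z j - z₀))
    (z : ℝ → Fin n → ℂ)
    (hz : ∀ t j, z t j = z₀ +
      ((Real.sqrt (2 * ω.re * t + 1) : ℝ) : ℂ) *
        Complex.exp (Complex.I * ((ω.im / (2 * ω.re) : ℝ) : ℂ) *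
          ((Real.log (2 * ω.re * t + 1) : ℝ) : ℂ)) * (Z j - z₀)) :
    (∀ j, z 0 j = Z j) ∧
    (∀ t : ℝ, 2 * ω.re * t + 1 > 0 → memDV (z t)) ∧
    (∀ t : ℝ, 2 * ω.re * t + 1 > 0 →
      ∀ j, HasDerivAt (fun s => z s j) (vortexField κ (z t) j) t) := by
  have ha0 : ω.re ≠ 0 := hω
  set a : ℝ := ω.re with ha
  set β : ℝ := ω.im / (2 * a) with hβ
  set s : ℝ → ℝ := fun t => 2 * a * t + 1 with hsdef
  set F : ℝ → ℂ := fun t => ((Real.sqrt (s t) : ℝ) : ℂ) *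
      Complex.exp (Complex.I * ((β : ℝ) : ℂ) * ((Real.log (s t) : ℝ) : ℂ)) with hFdef
  have hzF : ∀ t j, z t j = z₀ + F t * (Z j - z₀) := hz
  set c : ℂ := 1/2 + Complex.I * (β : ℂ) with hcdef
  -- F t ≠ 0 when s t > 0
  have hFne : ∀ t : ℝ, 0 < s t → F t ≠ 0 := by
    intro t ht
    exact mul_ne_zero (by exact_mod_cast (Real.sqrt_pos.2 ht).ne') (Complex.exp_ne_zero _)
  -- F equals exp(c · log (s t)) when s t > 0
  have hFG : ∀ t : ℝ, 0 < s t →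
      F t = Complex.exp (c * ((Real.log (s t) : ℝ) : ℂ)) := by
    intro t ht
    rw [hFdef]
    simp only
    rw [sqrt_eq_cexp ht, ← Complex.exp_add]
    congr 1
    rw [hcdef]; ring
  -- c * 2a = ω
  have hcω : c * ((2 * a : ℝ) : ℂ) = ω := by
    have h2a : (2 : ℝ) * a ≠ 0 := mul_ne_zero two_ne_zero ha0
    have hb : β * (2 * a) = ω.im := by
      rw [hβ]; field_simp
    have h1 : c * ((2 * a : ℝ) : ℂ) = (a : ℂ) + ((β * (2 * a) : ℝ) : ℂ) * Complex.I := by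
      rw [hcdef]; push_cast; ring
    rw [h1, hb, ha]
    exact Complex.re_add_im ω
  refine ⟨?_, ?_, ?_⟩
  · intro j
    rw [hzF]
    have h1 : s 0 = 1 := by simp [hsdef]
    rw [hFdef]
    simp only [h1]
    simp
  · intro t ht j k hjk heq
    have hst : 0 < s t := ht
    rw [hzF, hzF] at heq
    have h2 := mul_left_cancel₀ (hFne t hst) (add_left_cancel heq)
    exact hZ j k hjk (by linear_combination h2)
  · intro t ht j
    have hst : 0 < s t := ht
    have hsne : ((s t : ℝ) : ℂ) ≠ 0 := by exact_mod_cast hst.ne'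
    -- derivative of s
    have hs' : HasDerivAt s (2 * a) t := by
      exact (((hasDerivAt_id t).const_mul (2 * a)).add_const 1).congr_deriv (by ring)
    have hlog : HasDerivAt (fun t => Real.log (s t)) ((s t)⁻¹ * (2 * a)) t :=
      (Real.hasDerivAt_log hst.ne').comp t hs'
    have hlogC : HasDerivAt (fun t => ((Real.log (s t) : ℝ) : ℂ))
        (((s t)⁻¹ * (2 * a) : ℝ) : ℂ) t := hlog.ofReal_comp
    have hG : HasDerivAt (fun t' => Complex.exp (c * ((Real.log (s t') : ℝ) : ℂ)))
        (F t * ω / ((s t : ℝ) : ℂ)) t := by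
      have h := (hlogC.const_mul c).cexp
      convert h using 1
      rw [← hFG t hst, ← hcω]
      push_cast
      field_simp
    -- F has the same derivative
    have hFderiv : HasDerivAt F (F t * ω / ((s t : ℝ) : ℂ)) t := by
      apply hG.congr_of_eventuallyEq
      have hev : ∀ᶠ t' in nhds t, 0 < s t' :=
        hs'.continuousAt.eventually (eventually_gt_nhds hst)
      filter_upwards [hev] with t' ht' using hFG t' ht'
    have hcurve : HasDerivAt (fun t' => z t' j)
        (F t * ω / ((s t : ℝ) : ℂ) * (Z j - z₀)) t := by
      have h := (hFderiv.mul_const (Z j - z₀)).const_add z₀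
      have hfun : (fun t' => z t' j) = fun t' => z₀ + F t' * (Z j - z₀) := by
        funext t'; rw [hzF]
      rw [hfun]
      exact h
    -- the vortex field at z t
    have habs2 : ((‖F t‖ : ℝ) : ℂ) ^ 2 = ((s t : ℝ) : ℂ) := by
      have h1 : ‖F t‖ = Real.sqrt (s t) := by
        rw [hFdef]
        simp only
        rw [norm_mul, Complex.norm_real, Real.norm_of_nonneg (Real.sqrt_nonneg _), Complex.norm_exp]
        have h2 : (Complex.I * ((β : ℝ) : ℂ) * ((Real.log (s t) : ℝ) : ℂ)).re = 0 := by
          simp [Complex.mul_re]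
        rw [h2, Real.exp_zero, mul_one]
      rw [h1, ← Complex.ofReal_pow, Real.sq_sqrt hst.le]
    have hVz : vortexField κ (z t) j = F t * ω / ((s t : ℝ) : ℂ) * (Z j - z₀) := by
      have step : vortexField κ (z t) j = F t / ((s t : ℝ) : ℂ) * vortexField κ Z j := by
        simp only [vortexField, Finset.mul_sum]
        apply Finset.sum_congr rfl
        intro k hk
        have hkj : k ≠ j := (Finset.mem_erase.1 hk).1
        have hdk : Z j - Z k ≠ 0 := sub_ne_zero.2 (hZ j k hkj.symm)
        have habsdk : ((‖Z j - Z k‖ : ℝ) : ℂ) ≠ 0 := by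
          exact_mod_cast (norm_ne_zero_iff.mpr hdk)
        have hdiff : z t j - z t k = F t * (Z j - Z k) := by
          rw [hzF, hzF]; ring
        rw [hdiff, norm_mul]
        push_cast
        rw [mul_pow]
        rw [show (((‖F t‖ : ℝ)) : ℂ) ^ 2 = ((s t : ℝ) : ℂ) from habs2]
        field_simp
      rw [step, hV j]
      ring
    rw [hVz]
    exact hcurve
end

section
/- Let n ≥ 2, let κ = (κ₁,…,κₙ) be a circulation with all κⱼ ∈ ℝ nonzero, let Z ∈ DV, and write V_j = V_j(Z). Then there exists ω ∈ ℂ with V_k − V_j = ω(Z_k − Z_j) for all j, k if and only if exactly one of the following holds: (i) V_j = 0 for all j (Z is a fixed point); (ii) there exists v ∈ ℂ, v ≠ 0, with V_j = v for all j (Z is translational); (iii) there exist λ ∈ ℝ∖{0} and z₀ ∈ ℂ with V_j = i·λ·(Z_j − z₀) for all j (Z is rotational); (iv) there exist ω ∈ ℂ with Re(ω) ≠ 0 and z₀ ∈ ℂ with V_j = ω·(Z_j − z₀) for all j (Z is collapsing). -/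
/-- `Z` is a fixed point: all velocities vanish. -/
noncomputable def isFixed {n : ℕ} (κ : Fin n → ℝ) (Z : Fin n → ℂ) : Prop :=
  ∀ j, vortexField κ Z j = 0

/-- `Z` is translational: all velocities equal a common nonzero `v`. -/
noncomputable def isTranslational {n : ℕ} (κ : Fin n → ℝ) (Z : Fin n → ℂ) : Prop :=
  ∃ v : ℂ, v ≠ 0 ∧ ∀ j, vortexField κ Z j = v

/-- `Z` is rotational: `V_j = i·λ·(Z_j − z₀)` with `λ ∈ ℝ∖{0}`. -/
noncomputable def isRotational {n : ℕ} (κ : Fin n → ℝ) (Z : Fin n → ℂ) : Prop :=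
  ∃ lam : ℝ, lam ≠ 0 ∧ ∃ z₀ : ℂ, ∀ j, vortexField κ Z j = Complex.I * (lam : ℂ) * (Z j - z₀)

/-- `Z` is collapsing: `V_j = ω·(Z_j − z₀)` with `Re ω ≠ 0`. -/
noncomputable def isCollapsing {n : ℕ} (κ : Fin n → ℝ) (Z : Fin n → ℂ) : Prop :=
  ∃ ω : ℂ, ω.re ≠ 0 ∧ ∃ z₀ : ℂ, ∀ j, vortexField κ Z j = ω * (Z j - z₀)

/-- Two linear forms representing the same velocity field have equal slopes,
given two distinct positions. -/
lemma key_eq {n : ℕ} (Z V : Fin n → ℂ) (j0 j1 : Fin n) (hZ01 : Z j0 ≠ Z j1)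
    (a b w0 w1 : ℂ) (h1 : ∀ j, V j = a * (Z j - w0)) (h2 : ∀ j, V j = b * (Z j - w1)) :
    a = b := by
  have e : (a - b) * (Z j0 - Z j1) = 0 := by
    have e0 := h1 j0; have e1 := h1 j1; have e2 := h2 j0; have e3 := h2 j1
    linear_combination e1 - e0 + e2 - e3
  rcases mul_eq_zero.mp e with h | h
  · exact sub_eq_zero.mp h
  · exact absurd (sub_eq_zero.mp h) hZ01

/-- A nonzero-slope linear velocity field cannot be constant,
given two distinct positions. -/
lemma key_nc {n : ℕ} (Z V : Fin n → ℂ) (j0 j1 : Fin n) (hZ01 : Z j0 ≠ Z j1)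
    (a w0 c : ℂ) (ha : a ≠ 0) (h1 : ∀ j, V j = a * (Z j - w0))
    (h2 : ∀ j, V j = c) : False := by
  have e : a * (Z j0 - w0) = a * (Z j1 - w0) := by
    rw [← h1 j0, ← h1 j1, h2 j0, h2 j1]
  have := mul_left_cancel₀ ha e
  exact hZ01 (by linear_combination this)

/-- `Z` is self-similar (there is `ω ∈ ℂ` with
`V_k − V_j = ω(Z_k − Z_j)` for all `j, k`) iff exactly one of the four
mutually exclusive types holds: fixed, translational, rotational, collapsing. -/
theorem selfSimilar_iff_types {n : ℕ} (hn : 2 ≤ n) (κ : Fin n → ℝ) (hκ : ∀ j, κ j ≠ 0)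
    (Z : Fin n → ℂ) (hZ : memDV Z) :
    (∃ ω : ℂ, ∀ j k : Fin n,
        vortexField κ Z k - vortexField κ Z j = ω * (Z k - Z j)) ↔
    ((isFixed κ Z ∧ ¬ isTranslational κ Z ∧ ¬ isRotational κ Z ∧ ¬ isCollapsing κ Z) ∨
     (¬ isFixed κ Z ∧ isTranslational κ Z ∧ ¬ isRotational κ Z ∧ ¬ isCollapsing κ Z) ∨
     (¬ isFixed κ Z ∧ ¬ isTranslational κ Z ∧ isRotational κ Z ∧ ¬ isCollapsing κ Z) ∨
     (¬ isFixed κ Z ∧ ¬ isTranslational κ Z ∧ ¬ isRotational κ Z ∧ isCollapsing κ Z)) := by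
  have hj : (⟨0, by omega⟩ : Fin n) ≠ (⟨1, by omega⟩ : Fin n) := by
    simp [Fin.ext_iff]
  set j0 : Fin n := ⟨0, by omega⟩ with hj0
  set j1 : Fin n := ⟨1, by omega⟩ with hj1
  have hZ01 : Z j0 ≠ Z j1 := hZ _ _ hj
  constructor
  · rintro ⟨ω, hω⟩
    by_cases h0 : ω = 0
    · -- constant velocity field
      have hconst : ∀ j, (vortexField κ Z) j = (vortexField κ Z) j0 := by
        intro j
        have := hω j0 j
        rw [h0, zero_mul] at this
        exact sub_eq_zero.mp this
      by_cases hv : (vortexField κ Z) j0 = 0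
      · left
        refine ⟨fun j => by rw [hconst j, hv], ?_, ?_, ?_⟩
        · rintro ⟨v, hv0, hvj⟩
          exact hv0 (by rw [← hvj j0, hconst j0, hv])
        · rintro ⟨lam, hlam, z₀, h⟩
          exact key_nc Z (vortexField κ Z) j0 j1 hZ01 (Complex.I * (lam : ℂ)) z₀ 0
            (mul_ne_zero Complex.I_ne_zero (Complex.ofReal_ne_zero.mpr hlam))
            (fun j => by rw [h j]) (fun j => by rw [hconst j, hv])
        · rintro ⟨ω', hre, z₀, h⟩
          have hω' : ω' ≠ 0 := fun he => hre (by rw [he]; simp)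
          exact key_nc Z (vortexField κ Z) j0 j1 hZ01 ω' z₀ 0 hω'
            (fun j => h j) (fun j => by rw [hconst j, hv])
      · right; left
        refine ⟨fun hf => hv (hf j0), ⟨(vortexField κ Z) j0, hv, hconst⟩, ?_, ?_⟩
        · rintro ⟨lam, hlam, z₀, h⟩
          exact key_nc Z (vortexField κ Z) j0 j1 hZ01 (Complex.I * (lam : ℂ)) z₀ ((vortexField κ Z) j0)
            (mul_ne_zero Complex.I_ne_zero (Complex.ofReal_ne_zero.mpr hlam))
            (fun j => by rw [h j]) hconst
        · rintro ⟨ω', hre, z₀, h⟩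
          have hω' : ω' ≠ 0 := fun he => hre (by rw [he]; simp)
          exact key_nc Z (vortexField κ Z) j0 j1 hZ01 ω' z₀ ((vortexField κ Z) j0) hω' (fun j => h j) hconst
    · -- nonzero slope: linear field
      have hlin : ∀ j, (vortexField κ Z) j = ω * (Z j - (Z j0 - (vortexField κ Z) j0 / ω)) := by
        intro j
        have h1 := hω j0 j
        have h2 : ω * ((vortexField κ Z) j0 / ω) = (vortexField κ Z) j0 := mul_div_cancel₀ _ h0
        linear_combination h1 - h2
      set z₀ : ℂ := Z j0 - (vortexField κ Z) j0 / ω with hz₀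
      have hnotFix : ¬ isFixed κ Z := by
        intro hf
        exact key_nc Z (vortexField κ Z) j0 j1 hZ01 ω z₀ 0 h0 hlin (fun j => hf j)
      have hnotTr : ¬ isTranslational κ Z := by
        rintro ⟨v, hv0, hvj⟩
        exact key_nc Z (vortexField κ Z) j0 j1 hZ01 ω z₀ v h0 hlin (fun j => hvj j)
      by_cases hre : ω.re = 0
      · -- rotational
        have him : ω.im ≠ 0 := by
          intro h
          exact h0 (Complex.ext hre h)
        have hIω : Complex.I * (ω.im : ℂ) = ω := by
          apply Complex.ext <;> simp [hre]
        right; right; left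
        refine ⟨hnotFix, hnotTr, ⟨ω.im, him, z₀, fun j => by rw [hIω]; exact hlin j⟩, ?_⟩
        rintro ⟨ω', hre', z₁, h⟩
        have heq : ω = ω' := key_eq Z (vortexField κ Z) j0 j1 hZ01 ω ω' z₀ z₁ hlin (fun j => h j)
        exact hre' (heq ▸ hre)
      · -- collapsing
        right; right; right
        refine ⟨hnotFix, hnotTr, ?_, ⟨ω, hre, z₀, hlin⟩⟩
        rintro ⟨lam, hlam, z₁, h⟩
        have heq : ω = Complex.I * (lam : ℂ) :=
          key_eq Z (vortexField κ Z) j0 j1 hZ01 ω (Complex.I * (lam : ℂ)) z₀ z₁ hlin (fun j => h j)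
        apply hre
        rw [heq]
        simp
  · rintro (⟨hf, -, -, -⟩ | ⟨-, ⟨v, -, hv⟩, -, -⟩ | ⟨-, -, ⟨lam, -, z₀, h⟩, -⟩ |
      ⟨-, -, -, ⟨ω, -, z₀, h⟩⟩)
    · exact ⟨0, fun j k => by rw [show (vortexField κ Z) k = 0 from hf k, show (vortexField κ Z) j = 0 from hf j]; ring⟩
    · exact ⟨0, fun j k => by rw [show (vortexField κ Z) k = v from hv k, show (vortexField κ Z) j = v from hv j]; ring⟩
    · exact ⟨Complex.I * (lam : ℂ), fun j k => by
        rw [show (vortexField κ Z) k = _ from h k, show (vortexField κ Z) j = _ from h j]; ring⟩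
    · exact ⟨ω, fun j k => by
        rw [show (vortexField κ Z) k = _ from h k, show (vortexField κ Z) j = _ from h j]; ring⟩
end

section
/- Fix n ≥ 3 and a circulation κ = (κ₁,…,κₙ) with all κⱼ ∈ ℝ nonzero. For w = (w₁,…,w_{n−2}) ∈ DU, the system of n vortices z = (w₁,…,w_{n−2},1,0) ∈ DV is self-similar if and only if U_k(w) = 0 for all k = 1,…,n−2. -/
/-- Membership in `DU`: all coordinates differ from `0` and `1` and are pairwise
distinct. -/
def memDU {m : ℕ} (w : Fin m → ℂ) : Prop :=
  (∀ k, w k ≠ 0 ∧ w k ≠ 1) ∧ ∀ j k : Fin m, j ≠ k → w j ≠ w k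

/-- The vector field `U` on `DU` for a circulation `κ = (κ₁,…,κ_{m+2})` of `n = m + 2`
vortices (paper indices: `κ_k` for `k ≤ n−2`, `κ_{n−1}`, `κ_n`). -/
noncomputable def uField {m : ℕ} (κ : Fin (m + 2) → ℝ) (w : Fin m → ℂ) (k : Fin m) : ℂ :=
  ((κ (k.castAdd 2) : ℂ) + (κ (Fin.last (m + 1)) : ℂ)) * w k
      / ((‖w k‖ : ℝ) : ℂ) ^ 2
  + (κ ⟨m, by omega⟩ : ℂ) * (1 + (w k - 1) / ((‖w k - 1‖ : ℝ) : ℂ) ^ 2)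
  - w k * (κ (k.castAdd 2) : ℂ) *
      ((1 - w k) / ((‖1 - w k‖ : ℝ) : ℂ) ^ 2
        + w k / ((‖w k‖ : ℝ) : ℂ) ^ 2)
  - w k * ((κ ⟨m, by omega⟩ : ℂ) + (κ (Fin.last (m + 1)) : ℂ))
  + ∑ j ∈ Finset.univ.erase k, (κ (j.castAdd 2) : ℂ) *
      ((w k - w j) / ((‖w k - w j‖ : ℝ) : ℂ) ^ 2
        + w j / ((‖w j‖ : ℝ) : ℂ) ^ 2
        - w k * ((1 - w j) / ((‖1 - w j‖ : ℝ) : ℂ) ^ 2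
            + w j / ((‖w j‖ : ℝ) : ℂ) ^ 2))

/-- The extension of `w ∈ DU ⊆ ℂ^{n−2}` to the system `(w₁,…,w_{n−2},1,0) ∈ ℂⁿ`
of `n = m + 2` vortices. -/
noncomputable def extendSystem {m : ℕ} (w : Fin m → ℂ) (i : Fin (m + 2)) : ℂ :=
  if h : (i : ℕ) < m then w ⟨i, h⟩ else if (i : ℕ) = m then 1 else 0

lemma extend_castAdd {m : ℕ} (w : Fin m → ℂ) (j : Fin m) :
    extendSystem w (j.castAdd 2) = w j := by simp [extendSystem]

lemma extend_penult {m : ℕ} (w : Fin m → ℂ) :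
    extendSystem w ⟨m, by omega⟩ = 1 := by simp [extendSystem]

lemma extend_last {m : ℕ} (w : Fin m → ℂ) :
    extendSystem w (Fin.last (m+1)) = 0 := by simp [extendSystem, Fin.last]

lemma vortexField_eq_sum {n : ℕ} (κ : Fin n → ℝ) (z : Fin n → ℂ) (j : Fin n) :
    vortexField κ z j = Complex.I * ∑ k,
      (κ k : ℂ) * (z j - z k) / ((‖z j - z k‖ : ℝ) : ℂ) ^ 2 := by
  unfold vortexField
  congr 1
  apply Finset.sum_erase
  simp

lemma sum_split {m : ℕ} (f : Fin (m+2) → ℂ) :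
    ∑ i, f i = (∑ j : Fin m, f (j.castAdd 2)) + f ⟨m, by omega⟩ + f (Fin.last (m+1)) := by
  rw [Fin.sum_univ_castSucc, Fin.sum_univ_castSucc]; congr 1

lemma key {m : ℕ} (κ : Fin (m+2) → ℝ) (w : Fin m → ℂ) (k : Fin m) :
    Complex.I * uField κ w k =
      (vortexField κ (extendSystem w) (k.castAdd 2)
        - vortexField κ (extendSystem w) (Fin.last (m+1)))
      - w k * (vortexField κ (extendSystem w) ⟨m, by omega⟩
        - vortexField κ (extendSystem w) (Fin.last (m+1))) := by
  rw [vortexField_eq_sum, vortexField_eq_sum, vortexField_eq_sum]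
  simp only [sum_split, extend_castAdd, extend_penult, extend_last]
  simp only [zero_sub, sub_zero, map_neg_eq_map, map_one, sub_self, map_zero, norm_neg, norm_one, norm_zero,
    Complex.ofReal_one, Complex.ofReal_zero]
  unfold uField
  rw [Finset.sum_erase_eq_sub (Finset.mem_univ k)]
  have h1 : (∑ j : Fin m, (κ (j.castAdd 2) : ℂ) *
      ((w k - w j) / ((‖w k - w j‖ : ℝ) : ℂ) ^ 2
        + w j / ((‖w j‖ : ℝ) : ℂ) ^ 2
        - w k * ((1 - w j) / ((‖1 - w j‖ : ℝ) : ℂ) ^ 2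
            + w j / ((‖w j‖ : ℝ) : ℂ) ^ 2))) =
      (∑ j : Fin m, (κ (j.castAdd 2) : ℂ) * (w k - w j) / ((‖w k - w j‖ : ℝ) : ℂ) ^ 2)
      - (∑ j : Fin m, (κ (j.castAdd 2) : ℂ) * -w j / ((‖w j‖ : ℝ) : ℂ) ^ 2)
      - w k * ((∑ j : Fin m, (κ (j.castAdd 2) : ℂ) * (1 - w j) / ((‖1 - w j‖ : ℝ) : ℂ) ^ 2)
        - (∑ j : Fin m, (κ (j.castAdd 2) : ℂ) * -w j / ((‖w j‖ : ℝ) : ℂ) ^ 2)) := by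
    rw [← Finset.sum_sub_distrib, ← Finset.sum_sub_distrib, Finset.mul_sum,
      ← Finset.sum_sub_distrib]
    exact Finset.sum_congr rfl fun j _ => by ring
  rw [h1]
  ring

/-- for `w ∈ DU`, the system of `n = m + 2 ≥ 3` vortices
`z = (w₁,…,w_{n−2},1,0)` is self-similar iff `U_k(w) = 0` for all `k`. -/
theorem selfSimilar_iff_uField_zero {m : ℕ} (hm : 1 ≤ m)
    (κ : Fin (m + 2) → ℝ) (hκ : ∀ j, κ j ≠ 0)
    (w : Fin m → ℂ) (hw : memDU w) :
    (∃ ω : ℂ, ∀ j k : Fin (m + 2),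
        vortexField κ (extendSystem w) k - vortexField κ (extendSystem w) j =
          ω * (extendSystem w k - extendSystem w j)) ↔
    ∀ k : Fin m, uField κ w k = 0 := by
  constructor
  · rintro ⟨ω, hω⟩ k
    have h1 := hω (Fin.last (m+1)) (k.castAdd 2)
    have h2 := hω (Fin.last (m+1)) ⟨m, by omega⟩
    rw [extend_last, extend_castAdd, sub_zero] at h1
    rw [extend_last, extend_penult, sub_zero] at h2
    have hk := key κ w k
    rw [h1, h2] at hk
    have h0 : Complex.I * uField κ w k = 0 := by rw [hk]; ring
    rcases mul_eq_zero.mp h0 with h | h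
    · exact absurd h Complex.I_ne_zero
    · exact h
  · intro h
    refine ⟨vortexField κ (extendSystem w) ⟨m, by omega⟩
      - vortexField κ (extendSystem w) (Fin.last (m+1)), ?_⟩
    set ω := vortexField κ (extendSystem w) ⟨m, by omega⟩
      - vortexField κ (extendSystem w) (Fin.last (m+1)) with hω
    have main : ∀ i : Fin (m+2),
        vortexField κ (extendSystem w) i - vortexField κ (extendSystem w) (Fin.last (m+1)) =
          ω * extendSystem w i := by
      intro i
      rcases lt_or_ge (i : ℕ) m with hi | hi
      · have hieq : i = (⟨(i : ℕ), hi⟩ : Fin m).castAdd 2 := by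
          apply Fin.ext; rfl
        rw [hieq, extend_castAdd]
        have hk := key κ w ⟨(i : ℕ), hi⟩
        rw [h ⟨(i : ℕ), hi⟩, mul_zero] at hk
        linear_combination -hk
      · have hlt := i.isLt
        rcases (by omega : (i : ℕ) = m ∨ (i : ℕ) = m + 1) with hi2 | hi2
        · have hieq : i = (⟨m, by omega⟩ : Fin (m+2)) := by apply Fin.ext; exact hi2
          rw [hieq, extend_penult, mul_one, hω]
        · have hieq : i = Fin.last (m+1) := by apply Fin.ext; exact hi2
          rw [hieq, extend_last, mul_zero, sub_self]
    intro j k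
    have hj := main j
    have hk := main k
    linear_combination hk - hj
end

section
/- Let λ ∈ ℝ with λ ≠ 0 and λ ≠ 1, and consider the circulation κ = (−1, λ, λ/(λ−1)) for n = 3 vortices. For w = x + iy ∈ ℂ with w ≠ 0 and w ≠ 1, the system (w, 1, 0) ∈ DV is self-similar if and only if either (x − (λ−1)/λ)² + y² = (λ² − λ + 1)/λ², or w = 1/λ. Thus the set of self-similar configurations is the union of the circle centered at ((λ−1)/λ, 0) of radius √((λ² − λ + 1)/λ²) and the single point (1/λ, 0). -/
lemma sq_abs_cast (A : ℂ) : ((‖A‖ : ℝ) : ℂ)^2 = A * (starRingEnd ℂ) A := by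
  rw [← Complex.ofReal_pow, Complex.sq_norm, Complex.mul_conj]

lemma term_eq (a A : ℂ) (hA : A ≠ 0) :
    a * (A) / ((‖A‖ : ℝ) : ℂ)^2 = a / (starRingEnd ℂ) A := by
  have h2 : (starRingEnd ℂ) A ≠ 0 := by simpa using hA
  rw [sq_abs_cast]
  field_simp

lemma exists_omega_iff (V : Fin 3 → ℂ) (w : ℂ) (hw1 : w ≠ 1) :
    (∃ ω : ℂ, ∀ j k : Fin 3,
        V k - V j = ω * ((![w, 1, 0] : Fin 3 → ℂ) k - (![w, 1, 0] : Fin 3 → ℂ) j)) ↔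
    (V 2 - V 0) * (1 - w) = (V 1 - V 0) * (0 - w) := by
  have h1w : (1 : ℂ) - w ≠ 0 := sub_ne_zero.mpr (Ne.symm hw1)
  constructor
  · rintro ⟨ω, h⟩
    have h01 := h 0 1
    have h02 := h 0 2
    simp only [Matrix.cons_val_zero, Matrix.cons_val_one, Matrix.head_cons,
      Matrix.cons_val_two, Matrix.tail_cons] at h01 h02
    linear_combination (1 - w) * h02 - (0 - w) * h01
  · intro E
    refine ⟨(V 1 - V 0) / (1 - w), ?_⟩
    intro j k
    fin_cases j <;> fin_cases k <;>
      simp only [Matrix.cons_val_zero, Matrix.cons_val_one, Matrix.head_cons,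
        Matrix.cons_val_two, Matrix.tail_cons] <;>
      simp only [Fin.reduceFinMk, Fin.isValue, Matrix.cons_val] <;>
      norm_num <;>
      field_simp <;>
      first
        | linear_combination E
        | linear_combination -E
        | linear_combination 2*E
        | linear_combination -2*E
        | ring

set_option maxHeartbeats 1600000 in
/-- for the circulation `κ = (−1, λ, λ/(λ−1))` (`λ ≠ 0, 1`) of three
vortices and `w = x + iy` with `w ≠ 0, 1`, the system `(w, 1, 0)` is self-similar iff
`(x − (λ−1)/λ)² + y² = (λ² − λ + 1)/λ²` or `w = 1/λ`: the set of self-similar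
configurations is the union of a circle and a single point. -/
theorem three_vortex_selfSimilar_set (lam : ℝ) (h0 : lam ≠ 0) (h1 : lam ≠ 1)
    (w : ℂ) (hw0 : w ≠ 0) (hw1 : w ≠ 1) :
    (∃ ω : ℂ, ∀ j k : Fin 3,
        vortexField ![-1, lam, lam / (lam - 1)] ![w, 1, 0] k -
          vortexField ![-1, lam, lam / (lam - 1)] ![w, 1, 0] j =
        ω * ((![w, 1, 0] : Fin 3 → ℂ) k - (![w, 1, 0] : Fin 3 → ℂ) j)) ↔
    ((w.re - (lam - 1) / lam) ^ 2 + w.im ^ 2 = (lam ^ 2 - lam + 1) / lam ^ 2 ∨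
      w = 1 / (lam : ℂ)) := by
  have hl : (lam : ℂ) ≠ 0 := Complex.ofReal_ne_zero.mpr h0
  have hl1 : (lam : ℂ) - 1 ≠ 0 := by
    rw [sub_ne_zero]; exact_mod_cast h1
  have hw1' : w - 1 ≠ 0 := sub_ne_zero.mpr hw1
  have h10 : (1:ℂ) - w ≠ 0 := sub_ne_zero.mpr (Ne.symm hw1)
  have h0w : (0:ℂ) - w ≠ 0 := sub_ne_zero.mpr (Ne.symm hw0)
  have hcw : (starRingEnd ℂ) w ≠ 0 := by simpa using hw0
  have hcw1 : (starRingEnd ℂ) w - 1 ≠ 0 := by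
    intro h
    apply hw1'
    have h2 := congrArg (starRingEnd ℂ) h
    simpa [map_sub, map_one] using h2
  set u := (starRingEnd ℂ) w with hu
  have hV0 : vortexField ![-1, lam, lam / (lam - 1)] ![w, 1, 0] 0 =
      Complex.I * ((lam : ℂ) / (u - 1) + ((lam:ℂ) / ((lam:ℂ) - 1)) / u) := by
    rw [vortexField, Finset.sum_erase _ (by simp), Fin.sum_univ_three]
    simp only [Matrix.cons_val_zero, Matrix.cons_val_one, Matrix.head_cons,
      Matrix.cons_val_two, Matrix.tail_cons]
    push_cast
    rw [term_eq _ _ hw1', term_eq _ (w - 0) (by simpa using hw0)]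
    simp only [map_sub, map_one, map_zero, sub_self, sub_zero, ← hu]
    field_simp
    simp only [zero_mul, zero_div, neg_zero, zero_add]
    ring
  have hV1 : vortexField ![-1, lam, lam / (lam - 1)] ![w, 1, 0] 1 =
      Complex.I * ((1:ℂ) / (u - 1) + (lam:ℂ) / ((lam:ℂ) - 1)) := by
    rw [vortexField, Finset.sum_erase _ (by simp), Fin.sum_univ_three]
    simp only [Matrix.cons_val_zero, Matrix.cons_val_one, Matrix.head_cons,
      Matrix.cons_val_two, Matrix.tail_cons]
    push_cast
    rw [term_eq _ _ h10, term_eq _ ((1:ℂ) - 0) (by norm_num)]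
    simp only [map_sub, map_one, map_zero, sub_self, sub_zero, ← hu, div_one,
      mul_zero, zero_div, add_zero, zero_add, Complex.ofReal_zero]
    have h1u : (1:ℂ) - u ≠ 0 := by intro h; exact hcw1 (by linear_combination -h)
    have heq : (-1 : ℂ) / (1 - u) = 1 / (u - 1) := by
      rw [div_eq_div_iff h1u hcw1]; ring
    rw [heq]
  have hV2 : vortexField ![-1, lam, lam / (lam - 1)] ![w, 1, 0] 2 =
      Complex.I * ((1:ℂ) / u - (lam:ℂ)) := by
    rw [vortexField, Finset.sum_erase _ (by simp), Fin.sum_univ_three]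
    simp only [Matrix.cons_val_zero, Matrix.cons_val_one, Matrix.head_cons,
      Matrix.cons_val_two, Matrix.tail_cons]
    push_cast
    rw [term_eq _ _ h0w, term_eq _ ((0:ℂ) - 1) (by norm_num)]
    simp only [map_sub, map_one, map_zero, sub_self, ← hu]
    have h1 : (-1 : ℂ) / (0 - u) = 1 / u := by
      rw [div_eq_div_iff (by simpa using hcw) hcw]; ring
    rw [h1]
    norm_num
    ring
  set D : ℂ := u * (u - 1) * ((lam:ℂ) - 1) with hD
  set N0 : ℂ := (lam:ℂ) * u * ((lam:ℂ) - 1) + (lam:ℂ) * (u - 1) with hN0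
  set N1 : ℂ := u * ((lam:ℂ) - 1) + (lam:ℂ) * u * (u - 1) with hN1
  set N2 : ℂ := (u - 1) * ((lam:ℂ) - 1) - (lam:ℂ) * u * (u - 1) * ((lam:ℂ) - 1) with hN2
  have hden : D ≠ 0 := mul_ne_zero (mul_ne_zero hcw hcw1) hl1
  set F : ℂ := (lam:ℂ) * (w * u) - ((lam:ℂ) - 1) * (w + u) - 1 with hF
  have hV0' : vortexField ![-1, lam, lam / (lam - 1)] ![w, 1, 0] 0 = Complex.I * N0 / D := by
    rw [hV0, eq_div_iff hden, hN0, hD]; field_simp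
  have hV1' : vortexField ![-1, lam, lam / (lam - 1)] ![w, 1, 0] 1 = Complex.I * N1 / D := by
    rw [hV1, eq_div_iff hden, hN1, hD]; field_simp
  have hV2' : vortexField ![-1, lam, lam / (lam - 1)] ![w, 1, 0] 2 = Complex.I * N2 / D := by
    rw [hV2, eq_div_iff hden, hN2, hD]; field_simp
  rw [exists_omega_iff _ w hw1, hV0', hV1', hV2']
  have e2 : (Complex.I * N2 / D - Complex.I * N0 / D) * (1 - w) =
      Complex.I * ((N2 - N0) * (1 - w)) / D := by ring
  have e1 : (Complex.I * N1 / D - Complex.I * N0 / D) * (0 - w) =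
      Complex.I * ((N1 - N0) * (0 - w)) / D := by ring
  rw [e2, e1, div_eq_div_iff hden hden, mul_left_inj' hden,
    mul_right_inj' Complex.I_ne_zero]
  have step1 : ((N2 - N0) * (1 - w) = (N1 - N0) * (0 - w)) ↔ ((lam:ℂ) * u - 1) * F = 0 := by
    constructor
    · intro h; linear_combination h
    · intro h; linear_combination h
  rw [step1, mul_eq_zero]
  have hpoint : ((lam:ℂ) * u - 1 = 0) ↔ w = 1 / (lam:ℂ) := by
    constructor
    · intro h
      have h2 := congrArg (starRingEnd ℂ) h
      simp only [map_sub, map_mul, map_one, map_zero, Complex.conj_ofReal, hu,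
        Complex.conj_conj] at h2
      field_simp
      linear_combination h2
    · intro h
      rw [hu, h]
      rw [map_div₀, map_one, Complex.conj_ofReal]
      field_simp
      norm_num
  have hwu : w * u = ((w.re^2 + w.im^2 : ℝ) : ℂ) := by
    rw [hu, Complex.mul_conj]
    norm_num [Complex.normSq_apply]
    ring_nf
  have hadd : w + u = ((2 * w.re : ℝ) : ℂ) := by
    rw [hu, Complex.add_conj]
  have hFr : F = ((lam * (w.re^2 + w.im^2) - (lam - 1) * (2 * w.re) - 1 : ℝ) : ℂ) := by
    rw [hF, hwu, hadd]; push_cast; ring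
  have hcirc : (F = 0) ↔
      (w.re - (lam - 1) / lam) ^ 2 + w.im ^ 2 = (lam ^ 2 - lam + 1) / lam ^ 2 := by
    rw [hFr, Complex.ofReal_eq_zero]
    constructor
    · intro h
      field_simp
      linear_combination lam * h
    · intro h
      field_simp at h
      have h3 : lam * (lam * (w.re^2 + w.im^2) - (lam - 1) * (2 * w.re) - 1) = 0 := by
        linear_combination h
      exact (mul_eq_zero.mp h3).resolve_left h0
  rw [hpoint, hcirc, or_comm]
end

section
/- Let λ ∈ ℝ with λ ≠ 0 and λ ≠ 1, and consider the circulation κ = (−1, λ, λ/(λ−1)) for n = 3 vortices. Then the system Z = (1/λ, 1, 0) ∈ DV is a fixed point: V_j(Z) = 0 for j = 1, 2, 3. -/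
lemma key_s12 (c : ℂ) (r : ℝ) : c * (r:ℂ) / ((‖(r:ℂ)‖ : ℝ):ℂ)^2 = c / r := by
  rw [Complex.norm_real, Real.norm_eq_abs]
  by_cases hr : r = 0
  · simp [hr]
  · have h2 : ((|r| : ℝ):ℂ)^2 = (r:ℂ)^2 := by norm_cast; exact sq_abs r
    have hrc : (r:ℂ) ≠ 0 := by exact_mod_cast hr
    rw [h2, sq, mul_div_assoc, div_mul_cancel_left₀ hrc, ← div_eq_mul_inv]

/-- for the circulation `κ = (−1, λ, λ/(λ−1))` (`λ ≠ 0, 1`) of three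
vortices, the system `Z = (1/λ, 1, 0)` is a fixed point: `V_j(Z) = 0` for all `j`. -/
theorem three_vortex_fixed_point (lam : ℝ) (h0 : lam ≠ 0) (h1 : lam ≠ 1) :
    ∀ j : Fin 3,
      vortexField ![-1, lam, lam / (lam - 1)] ![1 / (lam : ℂ), 1, 0] j = 0 := by
  have hc0 : (lam:ℂ) ≠ 0 := by exact_mod_cast h0
  have hc1 : (lam:ℂ) - 1 ≠ 0 := by
    intro h; apply h1; have := sub_eq_zero.mp h; exact_mod_cast this
  have hc1' : (1:ℂ) - (lam:ℂ) ≠ 0 := by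
    intro h; apply hc1; linear_combination -h
  have hr1 : (1/lam - 1 : ℝ) ≠ 0 := by
    intro h; apply h1; field_simp at h; linarith
  have hr2 : (1 - 1/lam : ℝ) ≠ 0 := by intro h; apply hr1; linarith
  have c0 : vortexField ![-1, lam, lam / (lam - 1)] ![1 / (lam : ℂ), 1, 0] 0 = 0 := by
    have e0 : (Finset.univ.erase (0 : Fin 3)) = {1, 2} := by decide
    simp only [vortexField, e0]
    rw [Finset.sum_insert (by decide : (1 : Fin 3) ∉ ({2} : Finset (Fin 3))), Finset.sum_singleton]
    simp only [Matrix.cons_val_zero, Matrix.cons_val_one, Matrix.head_cons,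
      Matrix.cons_val_two, Matrix.tail_cons]
    rw [show (1/(lam:ℂ)) - 1 = ((1/lam - 1 : ℝ):ℂ) by push_cast; ring,
        show (1/(lam:ℂ)) - 0 = ((1/lam : ℝ):ℂ) by push_cast; ring,
        key_s12, key_s12]
    rw [mul_eq_zero]; right
    push_cast
    field_simp [hc1']
    ring
  have c1 : vortexField ![-1, lam, lam / (lam - 1)] ![1 / (lam : ℂ), 1, 0] 1 = 0 := by
    have e0 : (Finset.univ.erase (1 : Fin 3)) = {0, 2} := by decide
    simp only [vortexField, e0]
    rw [Finset.sum_insert (by decide : (0 : Fin 3) ∉ ({2} : Finset (Fin 3))), Finset.sum_singleton]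
    simp only [Matrix.cons_val_zero, Matrix.cons_val_one, Matrix.head_cons,
      Matrix.cons_val_two, Matrix.tail_cons]
    rw [show (1:ℂ) - 1/(lam:ℂ) = ((1 - 1/lam : ℝ):ℂ) by push_cast; ring,
        show (1:ℂ) - 0 = ((1 : ℝ):ℂ) by push_cast; ring,
        key_s12, key_s12]
    rw [mul_eq_zero]; right
    push_cast
    field_simp [hc1']
    ring
  have c2 : vortexField ![-1, lam, lam / (lam - 1)] ![1 / (lam : ℂ), 1, 0] 2 = 0 := by
    have e0 : (Finset.univ.erase (2 : Fin 3)) = {0, 1} := by decide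
    simp only [vortexField, e0]
    rw [Finset.sum_insert (by decide : (0 : Fin 3) ∉ ({1} : Finset (Fin 3))), Finset.sum_singleton]
    simp only [Matrix.cons_val_zero, Matrix.cons_val_one, Matrix.head_cons,
      Matrix.cons_val_two, Matrix.tail_cons]
    rw [show (0:ℂ) - 1/(lam:ℂ) = ((-(1/lam) : ℝ):ℂ) by push_cast; ring,
        show (0:ℂ) - 1 = ((-1 : ℝ):ℂ) by push_cast; ring,
        key_s12, key_s12]
    rw [mul_eq_zero]; right
    push_cast
    field_simp
    ring
  intro j
  fin_cases j
  · exact c0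
  · exact c1
  · exact c2
end

section
/- Let λ = −(2 + √3) and consider the circulation κ = (1, λ, λ, 1) for n = 4 vortices. For every w ∈ ℂ with |w − √3|² = 2, the parallelogram system Z = (w + 1, w, 1, 0) lies in DV and is self-similar: there exists ω ∈ ℂ such that V_k(Z) − V_j(Z) = ω(Z_k − Z_j) for all j, k. -/
set_option maxHeartbeats 1000000 in
/-- for `λ = −(2 + √3)` and the Novikov circulation `κ = (1, λ, λ, 1)`,
every parallelogram system `Z = (w + 1, w, 1, 0)` with `|w − √3|² = 2` lies in `DV`
and is self-similar. -/
theorem novikov_parallelogram_selfSimilar (w : ℂ)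
    (hw : (‖w - (Real.sqrt 3 : ℝ)‖) ^ 2 = 2) :
    memDV (![w + 1, w, 1, 0] : Fin 4 → ℂ) ∧
    ∃ ω : ℂ, ∀ j k : Fin 4,
      vortexField ![1, -(2 + Real.sqrt 3), -(2 + Real.sqrt 3), 1] ![w + 1, w, 1, 0] k -
        vortexField ![1, -(2 + Real.sqrt 3), -(2 + Real.sqrt 3), 1] ![w + 1, w, 1, 0] j =
      ω * ((![w + 1, w, 1, 0] : Fin 4 → ℂ) k - (![w + 1, w, 1, 0] : Fin 4 → ℂ) j) := by
  have habs : ∀ d : ℂ, ((‖d‖ : ℝ) : ℂ) ^ 2 = d * (starRingEnd ℂ) d := by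
    intro d
    rw [← Complex.ofReal_pow, Complex.sq_norm, Complex.mul_conj]
  have hsum : ∀ (f : Fin 4 → ℂ) (j : Fin 4),
      ∑ k ∈ Finset.univ.erase j, f k = (∑ k, f k) - f j :=
    fun f j => Finset.sum_erase_eq_sub (Finset.mem_univ j)
  set s : ℂ := ((Real.sqrt 3 : ℝ) : ℂ) with hsdef
  set u : ℂ := (starRingEnd ℂ) w with hu
  have hs : s ^ 2 = 3 := by
    rw [hsdef, ← Complex.ofReal_pow, Real.sq_sqrt (by norm_num : (3:ℝ) ≥ 0)]
    norm_num
  have hc : (w - s) * (u - s) = 2 := by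
    have h1 : Complex.normSq (w - s) = 2 := by rw [← Complex.sq_norm]; exact_mod_cast hw
    have h2 : (u - s) = (starRingEnd ℂ) (w - s) := by
      rw [hu, map_sub, hsdef, Complex.conj_ofReal]
    rw [h2, Complex.mul_conj, h1]; norm_num
  have hc2 : w * u = s * w + s * u - 1 := by linear_combination hc - hs
  have hw0 : w ≠ 0 := by
    intro h
    rw [h] at hc; rw [hu, h, map_zero] at hc
    have : (3 : ℂ) = 2 := by linear_combination hc - hs
    norm_num at this
  have hw1 : w - 1 ≠ 0 := by
    intro h
    have hw' : w = 1 := by linear_combination h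
    rw [hw'] at hc; rw [hu, hw', map_one] at hc
    have h1 : s = 1 := by linear_combination (hs - hc) / 2
    rw [h1] at hs; norm_num at hs
  have hwm : w + 1 ≠ 0 := by
    intro h
    have hw' : w = -1 := by linear_combination h
    rw [hw'] at hc
    rw [hu, hw'] at hc
    simp only [map_neg, map_one] at hc
    have h1 : s = -1 := by linear_combination (hc - hs) / 2
    rw [h1] at hs; norm_num at hs
  have hu0 : u ≠ 0 := by rw [hu]; simpa using hw0
  have hu1 : u - 1 ≠ 0 := by
    intro h
    apply hw1
    have h2 : (starRingEnd ℂ) (w - 1) = 0 := by rw [map_sub, map_one, ← hu]; exact h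
    exact (map_eq_zero _).mp h2
  have hum : u + 1 ≠ 0 := by
    intro h
    apply hwm
    have h2 : (starRingEnd ℂ) (w + 1) = 0 := by rw [map_add, map_one, ← hu]; exact h
    exact (map_eq_zero _).mp h2
  have hw1' : 1 - w ≠ 0 := by intro h; apply hw1; linear_combination -h
  have hprod : (1 : ℂ) + w + w * u + u ≠ 0 := by
    intro h; exact (mul_ne_zero hwm hum) (by linear_combination h)
  have hprod' : (1 : ℂ) + w + (w * u + u) ≠ 0 := by
    intro h; exact (mul_ne_zero hwm hum) (by linear_combination h)
  have hu1' : 1 - u ≠ 0 := by intro h; apply hu1; linear_combination -h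
  constructor
  · intro j k hjk
    fin_cases j <;> fin_cases k <;> simp_all <;>
      first
        | (intro h; first
            | exact hw0 (by linear_combination h)
            | exact hw0 (by linear_combination -h)
            | exact hw1 (by linear_combination h)
            | exact hw1 (by linear_combination -h)
            | exact hwm (by linear_combination h)
            | exact hwm (by linear_combination -h))
  · have hV0 : vortexField ![1, -(2 + Real.sqrt 3), -(2 + Real.sqrt 3), 1] ![w + 1, w, 1, 0] 0 =
        Complex.I * (-(2 + s) + -(2 + s) / u + 1 / (u + 1)) := by
      rw [vortexField, hsum, Fin.sum_univ_four]
      simp only [Matrix.cons_val_zero, Matrix.cons_val_one, Matrix.head_cons,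
        Matrix.cons_val_two, Matrix.tail_cons, Matrix.cons_val_three]
      simp only [habs, map_sub, map_add, map_one, map_zero, ← hu, ← hsdef]
      push_cast
      rw [← hsdef]
      simp only [sub_self, div_zero, sub_zero, add_sub_cancel_left, add_sub_cancel_right, sub_add_cancel_left]
      field_simp
      ring
    have hV1 : vortexField ![1, -(2 + Real.sqrt 3), -(2 + Real.sqrt 3), 1] ![w + 1, w, 1, 0] 1 =
        Complex.I * (-1 + -(2 + s) / (u - 1) + 1 / u) := by
      rw [vortexField, hsum, Fin.sum_univ_four]
      simp only [Matrix.cons_val_zero, Matrix.cons_val_one, Matrix.head_cons,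
        Matrix.cons_val_two, Matrix.tail_cons, Matrix.cons_val_three]
      simp only [habs, map_sub, map_add, map_one, map_zero, ← hu, ← hsdef]
      push_cast
      rw [← hsdef]
      field_simp
      ring
    have hV2 : vortexField ![1, -(2 + Real.sqrt 3), -(2 + Real.sqrt 3), 1] ![w + 1, w, 1, 0] 2 =
        Complex.I * (1 + (2 + s) / (u - 1) - 1 / u) := by
      rw [vortexField, hsum, Fin.sum_univ_four]
      simp only [Matrix.cons_val_zero, Matrix.cons_val_one, Matrix.head_cons,
        Matrix.cons_val_two, Matrix.tail_cons, Matrix.cons_val_three]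
      simp only [habs, map_sub, map_add, map_one, map_zero, ← hu, ← hsdef]
      push_cast
      rw [← hsdef]
      simp only [sub_self, div_zero, sub_zero, add_sub_cancel_left, add_sub_cancel_right, sub_add_cancel_left,
        neg_mul_neg, neg_mul, neg_div, mul_div_mul_left _ _ hw0, sub_add_cancel_right, mul_zero, zero_div,
        one_mul, mul_one]
      field_simp
      ring
    have hV3 : vortexField ![1, -(2 + Real.sqrt 3), -(2 + Real.sqrt 3), 1] ![w + 1, w, 1, 0] 3 =
        Complex.I * (2 + s + (2 + s) / u - 1 / (u + 1)) := by
      rw [vortexField, hsum, Fin.sum_univ_four]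
      simp only [Matrix.cons_val_zero, Matrix.cons_val_one, Matrix.head_cons,
        Matrix.cons_val_two, Matrix.tail_cons, Matrix.cons_val_three]
      simp only [habs, map_sub, map_add, map_one, map_zero, ← hu, ← hsdef]
      push_cast
      rw [← hsdef]
      simp only [sub_self, zero_div, mul_zero, zero_mul, sub_zero]
      simp only [zero_sub, neg_mul_neg, neg_div]
      simp only [div_mul_eq_div_div]
      field_simp
      ring
    set v0 : ℂ := Complex.I * (-(2 + s) + -(2 + s) / u + 1 / (u + 1)) with hv0
    set v1 : ℂ := Complex.I * (-1 + -(2 + s) / (u - 1) + 1 / u) with hv1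
    set v2 : ℂ := Complex.I * (1 + (2 + s) / (u - 1) - 1 / u) with hv2
    set v3 : ℂ := Complex.I * (2 + s + (2 + s) / u - 1 / (u + 1)) with hv3
    refine ⟨v0 - v1, ?_⟩
    have h23 : v2 - v3 = v0 - v1 := by
      rw [hv0, hv1, hv2, hv3]
      field_simp
      ring
    have h12 : v1 - v2 = (v0 - v1) * (w - 1) := by
      rw [hv0, hv1, hv2]
      field_simp
      linear_combination ((1 + s) * u ^ 2 + (s + s ^ 2) * u - (2 + 2 * s - s ^ 2 - s ^ 3)) * hc2 +
        ((u + 1) * (u ^ 2 + s * u + s ^ 2) + (s ^ 2 + s + 1) * (w - 1)) * hs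
    intro j k
    fin_cases j <;> fin_cases k <;>
      simp only [Fin.zero_eta, Fin.mk_one, Fin.isValue, Matrix.cons_val_zero, Matrix.cons_val_one,
        Matrix.head_cons, Matrix.cons_val_two, Matrix.tail_cons, Matrix.cons_val_three,
        Fin.reduceFinMk, hV0, hV1, hV2, hV3] <;>
      first
        | ring1
        | linear_combination h12
        | linear_combination (-1 : ℂ) * h12
        | linear_combination h23
        | linear_combination (-1 : ℂ) * h23
        | linear_combination h12 + h23
        | linear_combination (-1 : ℂ) * h12 - h23
end
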